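/- For any real function f on the vertices, the L¹ norm of the directed gradient of f decomposes as the sum for the positive and negative parts: ∑_{u,v} (f(u)−f(v))⁺ φ(u,v) = ∑_{u,v} (f⁺(u)−f⁺(v))⁺ φ(u,v) + ∑_{u,v} (f⁻(u)−f⁻(v))⁺ φ(u,v), where f⁺ = max(f,0) and f⁻ = max(−f,0). -/

import Mathlib

open Finset

lemma ptwise (a b : ℝ) :
    max (a - b) 0 = max (max a 0 - max b 0) 0 + max (max (-b) 0 - max (-a) 0) 0 := by
  rcases le_total a 0 with ha | ha <;> rcases le_total b 0 with hb | hb <;>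
    simp [max_def] <;> split_ifs <;> linarith

theorem directed_grad_pos_neg_decomposition {V : Type*} [Fintype V]
    (K : V → V → ℝ) (π : V → ℝ)
    (hK0 : ∀ u v, 0 ≤ K u v) (hK1 : ∀ u, ∑ v, K u v = 1)
    (hπ : ∀ u, 0 < π u) (hstat : ∀ v, ∑ u, π u * K u v = π v)
    (f : V → ℝ) :
    ∑ u, ∑ v, max (f u - f v) 0 * (K u v * π u)
      = ∑ u, ∑ v, max (max (f u) 0 - max (f v) 0) 0 * (K u v * π u)
        + ∑ u, ∑ v, max (max (-f u) 0 - max (-f v) 0) 0 * (K u v * π u) := by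
  set g : V → ℝ := fun u => max (-f u) 0 with hg
  have key : ∀ u v : V, max (f u - f v) 0 * (K u v * π u)
      = max (max (f u) 0 - max (f v) 0) 0 * (K u v * π u)
        + max (g v - g u) 0 * (K u v * π u) := by
    intro u v
    rw [ptwise (f u) (f v)]; ring
  have hswap : ∑ u, ∑ v, max (g v - g u) 0 * (K u v * π u)
      = ∑ u, ∑ v, max (g u - g v) 0 * (K u v * π u) := by
    have hdiff : ∀ u v : V, max (g v - g u) 0 * (K u v * π u)
        - max (g u - g v) 0 * (K u v * π u) = (g v - g u) * (K u v * π u) := by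
      intro u v
      have : max (g v - g u) 0 - max (g u - g v) 0 = g v - g u := by
        rcases le_total (g v) (g u) with h | h <;> simp [max_def] <;> split_ifs <;> linarith
      rw [← sub_mul, this]
    have hzero : ∑ u, ∑ v, (g v - g u) * (K u v * π u) = 0 := by
      have h1 : ∑ u, ∑ v, g v * (K u v * π u) = ∑ v, g v * π v := by
        rw [Finset.sum_comm]
        refine Finset.sum_congr rfl fun v _ => ?_
        rw [← hstat v, Finset.mul_sum]
        refine Finset.sum_congr rfl fun u _ => ?_
        ring
      have h2 : ∑ u, ∑ v, g u * (K u v * π u) = ∑ u, g u * π u := by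
        refine Finset.sum_congr rfl fun u _ => ?_
        have : ∑ v, g u * (K u v * π u) = (g u * π u) * ∑ v, K u v := by
          rw [Finset.mul_sum]; exact Finset.sum_congr rfl fun v _ => by ring
        rw [this, hK1 u, mul_one]
      have := h1
      calc ∑ u, ∑ v, (g v - g u) * (K u v * π u)
          = ∑ u, ∑ v, (g v * (K u v * π u) - g u * (K u v * π u)) := by
            refine Finset.sum_congr rfl fun u _ => Finset.sum_congr rfl fun v _ => by ring
        _ = (∑ u, ∑ v, g v * (K u v * π u)) - ∑ u, ∑ v, g u * (K u v * π u) := by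
            rw [← Finset.sum_sub_distrib]
            exact Finset.sum_congr rfl fun u _ => by rw [Finset.sum_sub_distrib]
        _ = 0 := by rw [h1, h2]; rw [Finset.sum_comm] at *; simp
    have : ∑ u, ∑ v, (max (g v - g u) 0 * (K u v * π u)
        - max (g u - g v) 0 * (K u v * π u)) = 0 := by
      rw [Finset.sum_congr rfl fun u _ => Finset.sum_congr rfl fun v _ => hdiff u v]
      exact hzero
    have h3 : (∑ u, ∑ v, max (g v - g u) 0 * (K u v * π u))
        - ∑ u, ∑ v, max (g u - g v) 0 * (K u v * π u) = 0 := by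
      calc (∑ u, ∑ v, max (g v - g u) 0 * (K u v * π u))
          - ∑ u, ∑ v, max (g u - g v) 0 * (K u v * π u)
          = ∑ u, ∑ v, (max (g v - g u) 0 * (K u v * π u)
              - max (g u - g v) 0 * (K u v * π u)) := by
            rw [← Finset.sum_sub_distrib]
            exact Finset.sum_congr rfl fun u _ => (Finset.sum_sub_distrib _ _).symm
        _ = 0 := this
    linarith
  calc ∑ u, ∑ v, max (f u - f v) 0 * (K u v * π u)
      = ∑ u, ∑ v, (max (max (f u) 0 - max (f v) 0) 0 * (K u v * π u)
        + max (g v - g u) 0 * (K u v * π u)) := by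
        exact Finset.sum_congr rfl fun u _ => Finset.sum_congr rfl fun v _ => key u v
    _ = (∑ u, ∑ v, max (max (f u) 0 - max (f v) 0) 0 * (K u v * π u))
        + ∑ u, ∑ v, max (g v - g u) 0 * (K u v * π u) := by
        rw [← Finset.sum_add_distrib]
        exact Finset.sum_congr rfl fun u _ => by rw [Finset.sum_add_distrib]
    _ = _ := by rw [hswap]
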